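/- Any two solutions of the moment problem yield the same higher moments: if {x_j} \cup {y_j} and {x'_j} \cup {y'_j} both solve m_k = \sum_{j=1}^{n_x} x_j^k - \sum_{j=1}^{n_y} y_j^k for k = 1,...,K = n_x+n_y, then \sum_j x_j^k - \sum_j y_j^k = \sum_j (x'_j)^k - \sum_j (y'_j)^k for all k > K as well. -/

import Mathlib

open Finset MvPolynomial

section MomentAux

noncomputable def Eval1 {K : ℕ} (c : Fin K → ℝ) (k : ℕ) : ℝ :=
  MvPolynomial.aeval c (MvPolynomial.esymm (Fin K) ℝ k)

def Psum1 {K : ℕ} (c : Fin K → ℝ) (k : ℕ) : ℝ := ∑ i, c i ^ k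

lemma newton_real {K : ℕ} (c : Fin K → ℝ) (k : ℕ) :
    (k : ℝ) * Eval1 c k = (-1) ^ (k + 1) *
      ∑ t ∈ Finset.HasAntidiagonal.antidiagonal k with t.1 < k,
        (-1) ^ t.1 * Eval1 c t.1 * Psum1 c t.2 := by
  have := congrArg (MvPolynomial.aeval c) (MvPolynomial.mul_esymm_eq_sum (Fin K) ℝ k)
  simpa [Eval1, Psum1, MvPolynomial.psum, map_sum, map_mul, map_pow] using this

lemma eval1_zero {K : ℕ} (c : Fin K → ℝ) : Eval1 c 0 = 1 := by
  simp [Eval1, MvPolynomial.esymm_zero]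

lemma eval1_big {K : ℕ} (c : Fin K → ℝ) (k : ℕ) (hk : K < k) : Eval1 c k = 0 := by
  have : MvPolynomial.esymm (Fin K) ℝ k = 0 := by
    rw [MvPolynomial.esymm]
    rw [Finset.powersetCard_eq_empty.mpr (by simpa using hk)]
    simp
  simp [Eval1, this]

lemma esymm_eq_of_psum_eq {K : ℕ} (a b : Fin K → ℝ)
    (hp : ∀ k, 1 ≤ k → k ≤ K → Psum1 a k = Psum1 b k) :
    ∀ k, Eval1 a k = Eval1 b k := by
  intro k
  induction k using Nat.strong_induction_on with
  | _ k ih =>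
    rcases Nat.eq_zero_or_pos k with hk0 | hk0
    · subst hk0; rw [eval1_zero, eval1_zero]
    rcases le_or_gt k K with hkK | hkK
    · have hne : (k : ℝ) ≠ 0 := Nat.cast_ne_zero.mpr (by omega)
      have ha := newton_real a k
      have hb := newton_real b k
      have hsum : ∑ t ∈ Finset.HasAntidiagonal.antidiagonal k with t.1 < k,
            (-1 : ℝ) ^ t.1 * Eval1 a t.1 * Psum1 a t.2
          = ∑ t ∈ Finset.HasAntidiagonal.antidiagonal k with t.1 < k,
            (-1 : ℝ) ^ t.1 * Eval1 b t.1 * Psum1 b t.2 := by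
        refine Finset.sum_congr rfl ?_
        intro t ht
        rw [Finset.mem_filter, Finset.HasAntidiagonal.mem_antidiagonal] at ht
        have h1 : t.2 = k - t.1 := by omega
        have h2 : 1 ≤ t.2 := by omega
        have h3 : t.2 ≤ K := by omega
        rw [ih t.1 ht.2, hp t.2 h2 h3]
      have : (k : ℝ) * Eval1 a k = (k : ℝ) * Eval1 b k := by rw [ha, hb, hsum]
      exact mul_left_cancel₀ hne this
    · rw [eval1_big a k hkK, eval1_big b k hkK]

lemma psum_eq_all {K : ℕ} (a b : Fin K → ℝ)
    (hp : ∀ k, 1 ≤ k → k ≤ K → Psum1 a k = Psum1 b k) :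
    ∀ k, 1 ≤ k → Psum1 a k = Psum1 b k := by
  have he := esymm_eq_of_psum_eq a b hp
  intro k
  induction k using Nat.strong_induction_on with
  | _ k ih =>
    intro hk1
    rcases le_or_gt k K with hkK | hkK
    · exact hp k hk1 hkK
    · -- k > K : forward recurrence
      have key : ∀ c : Fin K → ℝ,
          ∑ t ∈ Finset.HasAntidiagonal.antidiagonal k with t.1 < k,
            (-1 : ℝ) ^ t.1 * Eval1 c t.1 * Psum1 c t.2 = 0 := by
        intro c
        have h0 := newton_real c k
        rw [eval1_big c k hkK, mul_zero] at h0
        have hne : ((-1 : ℝ) ^ (k + 1)) ≠ 0 := by positivity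
        field_simp at h0
        exact (mul_eq_zero.mp h0.symm).resolve_left hne
      have hmem : ((0 : ℕ), k) ∈ (Finset.HasAntidiagonal.antidiagonal k).filter (fun t => t.1 < k) := by
        rw [Finset.mem_filter, Finset.HasAntidiagonal.mem_antidiagonal]
        constructor
        · omega
        · omega
      have split : ∀ c : Fin K → ℝ,
          Psum1 c k = -∑ t ∈ (Finset.HasAntidiagonal.antidiagonal k |>.filter (fun t => t.1 < k)).erase (0, k),
            (-1 : ℝ) ^ t.1 * Eval1 c t.1 * Psum1 c t.2 := by
        intro c
        have := Finset.add_sum_erase _ (fun t : ℕ × ℕ => (-1 : ℝ) ^ t.1 * Eval1 c t.1 * Psum1 c t.2) hmem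
        rw [key c] at this
        simp only [pow_zero, one_mul, eval1_zero] at this
        linarith [this]
      rw [split a, split b]
      congr 1
      refine Finset.sum_congr rfl ?_
      intro t ht
      rw [Finset.mem_erase, Finset.mem_filter, Finset.HasAntidiagonal.mem_antidiagonal] at ht
      have ht1 : 1 ≤ t.1 := by
        rcases Nat.eq_zero_or_pos t.1 with h0 | h0
        · exfalso; apply ht.1; have : t.2 = k := by omega
          exact Prod.ext h0 this
        · exact h0
      have h2a : t.2 < k := by omega
      have h2b : 1 ≤ t.2 := by omega
      rw [he t.1, ih t.2 h2a h2b]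

lemma psum_append {m n : ℕ} (u : Fin m → ℝ) (v : Fin n → ℝ) (k : ℕ) :
    Psum1 (Fin.append u v) k = (∑ j, u j ^ k) + ∑ i, v i ^ k := by
  simp [Psum1, Fin.sum_univ_add, Fin.append_left, Fin.append_right]


end MomentAux

/-- Any two solutions of the moment problem have the same higher moments: if the
signed power sums of `{x_j} ∪ {y_j}` and `{x'_j} ∪ {y'_j}` agree for
`k = 1,…,K = n_x+n_y`, then they agree for all `k > K` as well. -/
theorem stmt_11 (nx ny : ℕ) (hnx : 0 < nx) (hny : 0 < ny)
    (x x' : Fin nx → ℝ) (y y' : Fin ny → ℝ)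
    (h : ∀ k : ℕ, 1 ≤ k → k ≤ nx + ny →
      ∑ j, x j ^ k - ∑ i, y i ^ k = ∑ j, x' j ^ k - ∑ i, y' i ^ k) :
    ∀ k : ℕ, nx + ny < k →
      ∑ j, x j ^ k - ∑ i, y i ^ k = ∑ j, x' j ^ k - ∑ i, y' i ^ k := by
  intro k hk
  set a : Fin (nx + ny) → ℝ := Fin.append x y' with ha
  set b : Fin (nx + ny) → ℝ := Fin.append x' y with hb
  have hp : ∀ m, 1 ≤ m → m ≤ nx + ny → Psum1 a m = Psum1 b m := by
    intro m h1 h2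
    rw [ha, hb, psum_append, psum_append]
    have := h m h1 h2
    linarith
  have := psum_eq_all a b hp k (by omega)
  rw [ha, hb, psum_append, psum_append] at this
  linarith
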